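/- Let (y_k)_{k≥0} be a strictly decreasing sequence of positive real numbers converging to 0, let η > 1, and assume there exists ρ ≥ 1 with (1/ρ) · y_k^η ≤ y_k − y_{k+1} ≤ ρ · y_k^η for all k ≥ 0. Then lim_{k→∞} 1 / (1 − (ln y_k)/(ln k)) = (η−1)/η. -/

import Mathlib

open Filter Topology

set_option maxHeartbeats 1000000

/-- Borel-rarefaction formula: if `y_k − y_{k+1} ≍ y_k^η` with `η > 1`, then
`1 / (1 − ln y_k / ln k) → (η−1)/η`. -/
theorem borel_rarefaction_formula
    (ys : ℕ → ℝ) (η ρ : ℝ)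
    (hpos : ∀ k, 0 < ys k) (hanti : StrictAnti ys)
    (hlim : Filter.Tendsto ys Filter.atTop (nhds 0))
    (hη : 1 < η) (hρ : 1 ≤ ρ)
    (hcomp : ∀ k : ℕ,
      (1/ρ) * ys k ^ η ≤ ys k - ys (k+1) ∧
      ys k - ys (k+1) ≤ ρ * ys k ^ η) :
    Filter.Tendsto
      (fun k : ℕ => 1 / (1 - Real.log (ys k) / Real.log (k : ℝ)))
      Filter.atTop (nhds ((η - 1) / η)) := by
  have hρ0 : 0 < ρ := lt_of_lt_of_le one_pos hρ
  set β : ℝ := η - 1 with hβdef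
  have hβ : 0 < β := by simp only [hβdef]; linarith
  set z : ℕ → ℝ := fun k => ys k ^ (-β) with hzdef
  have hzpos : ∀ k, 0 < z k := fun k => Real.rpow_pos_of_pos (hpos k) _
  -- smallness of ρ * ys k ^ β
  have hsmall : Tendsto (fun k => ρ * ys k ^ β) atTop (nhds 0) := by
    have h1 : Tendsto (fun k => ys k ^ β) atTop (nhds 0) := by
      have hc : ContinuousAt (fun x : ℝ => x ^ β) 0 :=
        Real.continuousAt_rpow_const 0 β (Or.inr hβ.le)
      have := hc.tendsto.comp hlim
      simpa [Function.comp_def, Real.zero_rpow hβ.ne'] using this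
    simpa using h1.const_mul ρ
  set ε : ℝ := min (1/2 : ℝ) (1/(2*β)) with hεdef
  have hεpos : 0 < ε := lt_min (by norm_num) (by positivity)
  obtain ⟨N, hN⟩ : ∃ N, ∀ k ≥ N, ρ * ys k ^ β ≤ ε :=
    eventually_atTop.mp (hsmall.eventually (eventually_le_nhds hεpos))
  -- key per-k estimate
  have key : ∀ k, ρ * ys k ^ β ≤ ε → β/ρ ≤ z (k+1) - z k ∧ z (k+1) - z k ≤ 4*β*ρ := by
    intro k hk
    have hy : 0 < ys k := hpos k
    have hy' : 0 < ys (k+1) := hpos (k+1)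
    have hlt : ys (k+1) < ys k := hanti (Nat.lt_succ_self k)
    set t : ℝ := (ys k - ys (k+1)) / ys k with htdef
    have ht0 : 0 < t := div_pos (by linarith) hy
    have ht1 : t < 1 := by rw [htdef, div_lt_one hy]; linarith
    have hyη : ys k ^ η = ys k ^ β * ys k := by
      rw [show η = β + 1 by simp [hβdef], Real.rpow_add hy, Real.rpow_one]
    have htub : t ≤ ρ * ys k ^ β := by
      have h2 := (hcomp k).2
      rw [htdef, div_le_iff₀ hy]
      calc ys k - ys (k+1) ≤ ρ * ys k ^ η := h2
        _ = ρ * ys k ^ β * ys k := by rw [hyη]; ring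
    have htlb : ys k ^ β / ρ ≤ t := by
      have h1 := (hcomp k).1
      rw [htdef, div_le_div_iff₀ hρ0 hy]
      calc ys k ^ β * ys k = ys k ^ η := hyη.symm
        _ = (1/ρ * ys k ^ η) * ρ := by field_simp
        _ ≤ (ys k - ys (k+1)) * ρ := mul_le_mul_of_nonneg_right h1 hρ0.le
    have htε : t ≤ ε := le_trans htub hk
    have ht12 : t ≤ 1/2 := le_trans htε (min_le_left _ _)
    have htβ : t ≤ 1/(2*β) := le_trans htε (min_le_right _ _)
    have h1t : (0:ℝ) < 1 - t := by linarith
    -- y(k+1) = y k * (1 - t)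
    have hy'eq : ys (k+1) = ys k * (1 - t) := by
      rw [htdef]; field_simp; ring
    have hzsplit : z (k+1) - z k = ys k ^ (-β) * ((1-t) ^ (-β) - 1) := by
      simp only [hzdef, hy'eq]
      rw [Real.mul_rpow hy.le h1t.le]
      ring
    -- bounds on -log(1-t)
    have hlog1 : Real.log (1-t) ≤ -t := by
      have := Real.log_le_sub_one_of_pos h1t
      linarith
    have hlog2 : -Real.log (1-t) ≤ 2*t := by
      have h := Real.log_le_sub_one_of_pos (inv_pos.mpr h1t)
      rw [Real.log_inv] at h
      have hfrac : (1-t)⁻¹ - 1 = t / (1-t) := by field_simp; ring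
      have : t / (1-t) ≤ 2*t := by
        rw [div_le_iff₀ h1t]
        nlinarith
      linarith
    set x : ℝ := Real.log (1-t) * (-β) with hxdef
    have hx0 : 0 ≤ x := by
      rw [hxdef]
      have : Real.log (1-t) ≤ 0 := Real.log_nonpos (by linarith) (by linarith)
      nlinarith
    have hxub : x ≤ 2*β*t := by
      rw [hxdef]; nlinarith
    have hxlb : β*t ≤ x := by
      rw [hxdef]; nlinarith
    have hx1 : x ≤ 1 := by
      calc x ≤ 2*β*t := hxub
        _ ≤ 2*β*(1/(2*β)) := mul_le_mul_of_nonneg_left htβ (by positivity)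
        _ = 1 := by field_simp
    have hu : (1-t) ^ (-β) = Real.exp x := by
      rw [Real.rpow_def_of_pos h1t, hxdef]
    have hulb : 1 + β*t ≤ (1-t) ^ (-β) := by
      rw [hu]
      calc 1 + β*t ≤ x + 1 := by linarith
        _ ≤ Real.exp x := Real.add_one_le_exp x
    have huub : (1-t) ^ (-β) ≤ 1 + 4*β*t := by
      rw [hu]
      have habs := Real.abs_exp_sub_one_le (by rw [abs_of_nonneg hx0]; exact hx1)
      rw [abs_of_nonneg hx0] at habs
      have : Real.exp x - 1 ≤ 2*x := le_trans (le_abs_self _) habs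
      linarith [hxub]
    have hinv : ys k ^ (-β) * ys k ^ β = 1 := by
      rw [← Real.rpow_add hy]; simp
    have hyk0 : 0 < ys k ^ (-β) := Real.rpow_pos_of_pos hy _
    constructor
    · rw [hzsplit]
      calc β/ρ = ys k ^ (-β) * ys k ^ β * (β/ρ) := by rw [hinv]; ring
        _ = ys k ^ (-β) * (β * (ys k ^ β / ρ)) := by ring
        _ ≤ ys k ^ (-β) * (β * t) := by
            apply mul_le_mul_of_nonneg_left _ hyk0.le
            exact mul_le_mul_of_nonneg_left htlb hβ.le
        _ ≤ ys k ^ (-β) * ((1-t) ^ (-β) - 1) := by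
            apply mul_le_mul_of_nonneg_left _ hyk0.le
            linarith
    · rw [hzsplit]
      calc ys k ^ (-β) * ((1-t) ^ (-β) - 1) ≤ ys k ^ (-β) * (4*β*t) := by
            apply mul_le_mul_of_nonneg_left _ hyk0.le
            linarith
        _ ≤ ys k ^ (-β) * (4*β*(ρ * ys k ^ β)) := by
            apply mul_le_mul_of_nonneg_left _ hyk0.le
            apply mul_le_mul_of_nonneg_left htub (by positivity)
        _ = 4*β*ρ * (ys k ^ (-β) * ys k ^ β) := by ring
        _ = 4*β*ρ := by rw [hinv]; ring
  have keyN : ∀ k ≥ N, β/ρ ≤ z (k+1) - z k ∧ z (k+1) - z k ≤ 4*β*ρ :=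
    fun k hk => key k (hN k hk)
  -- growth by induction
  have grow : ∀ k ≥ N, β/ρ * ((k:ℝ) - N) ≤ z k - z N ∧ z k - z N ≤ 4*β*ρ * ((k:ℝ) - N) := by
    intro k hk
    induction k, hk using Nat.le_induction with
    | base => simp
    | succ k hk ih =>
      obtain ⟨h1, h2⟩ := keyN k hk
      obtain ⟨h3, h4⟩ := ih
      constructor
      · push_cast; nlinarith
      · push_cast; nlinarith
  -- linear bounds
  set c₁ : ℝ := β/(2*ρ) with hc₁
  set c₂ : ℝ := z N + 4*β*ρ with hc₂
  have hc₁pos : 0 < c₁ := by rw [hc₁]; exact div_pos hβ (by linarith)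
  have hc₂pos : 0 < c₂ := by
    rw [hc₂]
    have h4 : (0:ℝ) < 4*β*ρ := by positivity
    linarith [hzpos N]
  have hbound : ∀ k ≥ max (2*N) 1, c₁ * k ≤ z k ∧ z k ≤ c₂ * k := by
    intro k hk
    have hk2N : 2*N ≤ k := le_trans (le_max_left _ _) hk
    have hk1 : 1 ≤ k := le_trans (le_max_right _ _) hk
    have hkN : N ≤ k := le_trans (Nat.le_mul_of_pos_left N (by norm_num)) hk2N
    obtain ⟨h1, h2⟩ := grow k hkN
    have hkr : (2*N : ℝ) ≤ (k:ℝ) := by exact_mod_cast hk2N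
    have hkr1 : (1:ℝ) ≤ (k:ℝ) := by exact_mod_cast hk1
    constructor
    · have hzN : 0 < z N := hzpos N
      have : β/ρ * ((k:ℝ) - N) ≤ z k := by linarith
      calc c₁ * k = β/ρ * ((k:ℝ)/2) := by rw [hc₁]; ring
        _ ≤ β/ρ * ((k:ℝ) - N) := by
            apply mul_le_mul_of_nonneg_left _ (by positivity)
            linarith
        _ ≤ z k := this
    · calc z k ≤ z N + 4*β*ρ * ((k:ℝ) - N) := by linarith
        _ ≤ z N * k + 4*β*ρ * k := by
            have hzN : 0 < z N := hzpos N
            have h4 : (0:ℝ) ≤ 4*β*ρ := by positivity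
            nlinarith
        _ = c₂ * k := by rw [hc₂]; ring
  -- log z k / log k → 1
  have hlogk : Tendsto (fun k : ℕ => Real.log k) atTop atTop :=
    Real.tendsto_log_atTop.comp tendsto_natCast_atTop_atTop
  have hinvlog : Tendsto (fun k : ℕ => (Real.log k)⁻¹) atTop (nhds 0) :=
    hlogk.inv_tendsto_atTop
  have hzlim : Tendsto (fun k : ℕ => Real.log (z k) / Real.log k) atTop (nhds 1) := by
    have hlow : Tendsto (fun k : ℕ => Real.log c₁ * (Real.log k)⁻¹ + 1) atTop (nhds 1) := by
      have := (hinvlog.const_mul (Real.log c₁)).add_const 1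
      simpa using this
    have hup : Tendsto (fun k : ℕ => Real.log c₂ * (Real.log k)⁻¹ + 1) atTop (nhds 1) := by
      have := (hinvlog.const_mul (Real.log c₂)).add_const 1
      simpa using this
    apply tendsto_of_tendsto_of_tendsto_of_le_of_le' hlow hup
    · filter_upwards [eventually_ge_atTop (max (max (2*N) 1) 2)] with k hk
      have hk2 : 2 ≤ k := le_trans (le_max_right _ _) hk
      have hkb := hbound k (le_trans (le_max_left _ _) hk)
      have hlogkpos : 0 < Real.log k := by
        apply Real.log_pos
        exact_mod_cast lt_of_lt_of_le one_lt_two (by exact_mod_cast hk2)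
      have hkpos : (0:ℝ) < k := by positivity
      have h1 : Real.log (c₁ * k) ≤ Real.log (z k) :=
        Real.log_le_log (by positivity) hkb.1
      rw [Real.log_mul hc₁pos.ne' (by positivity)] at h1
      rw [div_eq_mul_inv]
      calc Real.log c₁ * (Real.log k)⁻¹ + 1
          = (Real.log c₁ + Real.log k) * (Real.log k)⁻¹ := by
            field_simp
        _ ≤ Real.log (z k) * (Real.log k)⁻¹ := by
            apply mul_le_mul_of_nonneg_right _ (by positivity)
            linarith
    · filter_upwards [eventually_ge_atTop (max (max (2*N) 1) 2)] with k hk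
      have hk2 : 2 ≤ k := le_trans (le_max_right _ _) hk
      have hkb := hbound k (le_trans (le_max_left _ _) hk)
      have hlogkpos : 0 < Real.log k := by
        apply Real.log_pos
        exact_mod_cast lt_of_lt_of_le one_lt_two (by exact_mod_cast hk2)
      have hkpos : (0:ℝ) < k := by positivity
      have h1 : Real.log (z k) ≤ Real.log (c₂ * k) :=
        Real.log_le_log (hzpos k) hkb.2
      rw [Real.log_mul hc₂pos.ne' (by positivity)] at h1
      rw [div_eq_mul_inv]
      calc Real.log (z k) * (Real.log k)⁻¹
          ≤ (Real.log c₂ + Real.log k) * (Real.log k)⁻¹ := by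
            apply mul_le_mul_of_nonneg_right _ (by positivity)
            linarith
        _ = Real.log c₂ * (Real.log k)⁻¹ + 1 := by field_simp
  -- log ys k / log k → -(1/β)
  have hzlog : ∀ k, Real.log (z k) = -β * Real.log (ys k) := by
    intro k
    simp only [hzdef]
    rw [Real.log_rpow (hpos k)]
  have hylim : Tendsto (fun k : ℕ => Real.log (ys k) / Real.log k) atTop (nhds (-(1/β))) := by
    have h := hzlim.const_mul (-(1/β))
    have heq : (fun k : ℕ => -(1/β) * (Real.log (z k) / Real.log k))
        = fun k : ℕ => Real.log (ys k) / Real.log k := by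
      funext k
      rw [hzlog k, mul_div_assoc, ← mul_assoc]
      have hb : -(1/β) * -β = 1 := by field_simp
      rw [hb, one_mul]
    rw [heq] at h
    simpa using h
  -- conclude
  have hden : Tendsto (fun k : ℕ => 1 - Real.log (ys k) / Real.log k) atTop
      (nhds (1 - (-(1/β)))) := tendsto_const_nhds.sub hylim
  have hne : (1 - (-(1/β))) ≠ 0 := by
    have : 0 < 1 + 1/β := by positivity
    intro h; rw [sub_neg_eq_add] at h; linarith
  have hfin := (tendsto_const_nhds : Tendsto (fun _ : ℕ => (1:ℝ)) atTop (nhds 1)).div hden hne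
  have hval : (η - 1)/η = 1/(1 - -(1/β)) := by
    have hη0 : η ≠ 0 := by linarith
    have hβ0 : β ≠ 0 := hβ.ne'
    have hη1 : η - 1 ≠ 0 := by linarith
    rw [sub_neg_eq_add, hβdef]
    field_simp
    rw [sub_add_cancel, div_self hη0]
  rw [hval]
  exact hfin
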